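/- For fixed p > 1, the function W(p,p') = V(p) − Q(p) − V(p') + Q(p') − (p−1)(exp(V(p)−V(p')) − 1)/p is strictly increasing in p' on (p, ∞), where V(p) = p·ln(p²/(p²−1)) and Q(p) = ∫_p^∞ (−V'(v)/v) dv. -/

import Mathlib

open Real Set MeasureTheory

noncomputable def V (p : ℝ) : ℝ := p * Real.log (p ^ 2 / (p ^ 2 - 1))

noncomputable def Q (p : ℝ) : ℝ := ∫ v in Set.Ioi p, -(deriv V v) / v

noncomputable def W (p p' : ℝ) : ℝ :=
  V p - Q p - V p' + Q p' - (p - 1) * (Real.exp (V p - V p') - 1) / p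

lemma hasDerivAt_V {x : ℝ} (hx : 1 < x) :
    HasDerivAt V (Real.log (x ^ 2 / (x ^ 2 - 1)) - 2 / (x ^ 2 - 1)) x := by
  have hx0 : (0:ℝ) < x := lt_trans one_pos hx
  have h1 : (0:ℝ) < x ^ 2 - 1 := by nlinarith
  have hlog : HasDerivAt (fun t : ℝ => Real.log (t ^ 2 - 1)) (2 * x / (x ^ 2 - 1)) x := by
    have h2 : HasDerivAt (fun t : ℝ => t ^ 2 - 1) (2 * x) x := by
      simpa using (hasDerivAt_pow 2 x).sub_const 1
    have := (Real.hasDerivAt_log (ne_of_gt h1)).comp x h2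
    simpa [div_eq_inv_mul, mul_comm, Function.comp_def] using this
  have hlog2 : HasDerivAt (fun t : ℝ => 2 * Real.log t) (2 * x⁻¹) x :=
    (Real.hasDerivAt_log (ne_of_gt hx0)).const_mul 2
  have hf : HasDerivAt (fun t : ℝ => t * (2 * Real.log t - Real.log (t ^ 2 - 1)))
      (1 * (2 * Real.log x - Real.log (x ^ 2 - 1)) + x * (2 * x⁻¹ - 2 * x / (x ^ 2 - 1))) x :=
    (hasDerivAt_id x).mul (hlog2.sub hlog)
  have heq : V =ᶠ[nhds x] fun t : ℝ => t * (2 * Real.log t - Real.log (t ^ 2 - 1)) := by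
    filter_upwards [isOpen_Ioi.mem_nhds hx] with t ht
    have ht0 : (0:ℝ) < t := lt_trans one_pos ht
    have ht1 : (0:ℝ) < t ^ 2 - 1 := by nlinarith [mem_Ioi.mp ht]
    rw [V, Real.log_div (by positivity) (ne_of_gt ht1), Real.log_pow]
    push_cast; ring
  have := hf.congr_of_eventuallyEq heq
  refine this.congr_deriv ?_
  rw [Real.log_div (by positivity) (ne_of_gt h1), Real.log_pow]
  push_cast
  field_simp
  ring

lemma deriv_V_eq {x : ℝ} (hx : 1 < x) :
    deriv V x = Real.log (x ^ 2 / (x ^ 2 - 1)) - 2 / (x ^ 2 - 1) :=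
  (hasDerivAt_V hx).deriv

lemma log_bounds {x : ℝ} (hx : 1 < x) :
    1 / x ^ 2 < Real.log (x ^ 2 / (x ^ 2 - 1)) ∧
      Real.log (x ^ 2 / (x ^ 2 - 1)) ≤ 1 / (x ^ 2 - 1) := by
  have hx0 : (0:ℝ) < x := lt_trans one_pos hx
  have h1 : (0:ℝ) < x ^ 2 - 1 := by nlinarith
  have h2 : (0:ℝ) < x ^ 2 := by positivity
  constructor
  · have hne : (x ^ 2 - 1) / x ^ 2 ≠ 1 := by
      intro h
      rw [div_eq_iff (ne_of_gt h2), one_mul] at h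
      linarith
    have := Real.log_lt_sub_one_of_pos (by positivity : (0:ℝ) < (x ^ 2 - 1) / x ^ 2) hne
    have hval : Real.log ((x ^ 2 - 1) / x ^ 2) = - Real.log (x ^ 2 / (x ^ 2 - 1)) := by
      rw [Real.log_div (ne_of_gt h1) (ne_of_gt h2), Real.log_div (ne_of_gt h2) (ne_of_gt h1)]
      ring
    rw [hval] at this
    have h3 : (x ^ 2 - 1) / x ^ 2 - 1 = -(1 / x ^ 2) := by field_simp; ring
    rw [h3] at this
    linarith
  · have := Real.log_le_sub_one_of_pos (by positivity : (0:ℝ) < x ^ 2 / (x ^ 2 - 1))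
    have h3 : x ^ 2 / (x ^ 2 - 1) - 1 = 1 / (x ^ 2 - 1) := by field_simp; ring
    linarith [h3 ▸ this]

lemma deriv_V_neg {x : ℝ} (hx : 1 < x) : deriv V x < 0 := by
  have h1 : (0:ℝ) < x ^ 2 - 1 := by nlinarith [lt_trans one_pos hx]
  have hb := (log_bounds hx).2
  rw [deriv_V_eq hx]
  have : 1 / (x ^ 2 - 1) < 2 / (x ^ 2 - 1) := by
    rw [div_lt_div_iff₀ h1 h1]; nlinarith
  linarith

lemma contOn_dV : ContinuousOn (fun t : ℝ => Real.log (t ^ 2 / (t ^ 2 - 1)) - 2 / (t ^ 2 - 1))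
    (Set.Ioi 1) := by
  have hden : ∀ t ∈ Set.Ioi (1:ℝ), t ^ 2 - 1 ≠ 0 := by
    intro t ht; have : (1:ℝ) < t := ht; nlinarith
  apply ContinuousOn.sub
  · apply ContinuousOn.log
    · exact ((continuous_pow 2).continuousOn).div
        (((continuous_pow 2).sub continuous_const).continuousOn) hden
    · intro t ht
      have h1 : (1:ℝ) < t := ht
      have : t ^ 2 - 1 > 0 := by nlinarith
      positivity
  · exact continuousOn_const.div
      (((continuous_pow 2).sub continuous_const).continuousOn) hden

lemma contOn_derivV : ContinuousOn (deriv V) (Set.Ioi 1) :=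
  contOn_dV.congr fun t ht => deriv_V_eq ht

lemma contOn_g : ContinuousOn (fun v : ℝ => -(deriv V v) / v) (Set.Ioi 1) :=
  (contOn_derivV.neg).div continuousOn_id fun t ht => ne_of_gt (lt_trans one_pos ht)

lemma integrableOn_g {c : ℝ} (hc : 1 < c) :
    IntegrableOn (fun v : ℝ => -(deriv V v) / v) (Set.Ioi c) := by
  have hc0 : (0:ℝ) < c := lt_trans one_pos hc
  have hmaj : IntegrableOn (fun t : ℝ => (2 * c ^ 2 / (c ^ 2 - 1)) * t ^ (-3 : ℝ)) (Set.Ioi c) :=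
    (integrableOn_Ioi_rpow_of_lt (by norm_num) hc0).const_mul _
  apply Integrable.mono' hmaj
  · exact (contOn_g.mono (Set.Ioi_subset_Ioi (le_of_lt hc))).aestronglyMeasurable measurableSet_Ioi
  · rw [ae_restrict_iff' measurableSet_Ioi]
    filter_upwards with v hv
    have hv1 : 1 < v := lt_trans hc hv
    have hv0 : (0:ℝ) < v := lt_trans one_pos hv1
    have h1 : (0:ℝ) < v ^ 2 - 1 := by nlinarith
    have hc1 : (0:ℝ) < c ^ 2 - 1 := by nlinarith
    have hb := log_bounds hv1
    have hformula : -(deriv V v) / v = (2 / (v ^ 2 - 1) - Real.log (v ^ 2 / (v ^ 2 - 1))) / v := by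
      rw [deriv_V_eq hv1]; ring
    have h12 : 1 / (v ^ 2 - 1) ≤ 2 / (v ^ 2 - 1) := by
      gcongr
      norm_num
    have hpos : 0 ≤ -(deriv V v) / v := by
      rw [hformula]
      apply div_nonneg _ (le_of_lt hv0)
      linarith [hb.2]
    have hL0 : 0 < Real.log (v ^ 2 / (v ^ 2 - 1)) := by
      have : (0:ℝ) < 1 / v ^ 2 := by positivity
      linarith [hb.1]
    rw [Real.norm_eq_abs, abs_of_nonneg hpos, hformula]
    have hr : v ^ (-3 : ℝ) = 1 / v ^ 3 := by
      rw [show ((-3 : ℝ)) = -((3:ℕ):ℝ) by norm_num, Real.rpow_neg hv0.le, Real.rpow_natCast]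
      exact (one_div _).symm
    rw [hr]
    have hcv : c ≤ v := le_of_lt hv
    calc (2 / (v ^ 2 - 1) - Real.log (v ^ 2 / (v ^ 2 - 1))) / v
        ≤ (2 / (v ^ 2 - 1)) / v := by gcongr; linarith
      _ = 2 / ((v ^ 2 - 1) * v) := by rw [div_div]
      _ ≤ 2 * c ^ 2 / (c ^ 2 - 1) * (1 / v ^ 3) := by
          rw [show 2 * c ^ 2 / (c ^ 2 - 1) * (1 / v ^ 3) = (2 * c ^ 2) / ((c ^ 2 - 1) * v ^ 3) by
            field_simp]
          rw [div_le_div_iff₀ (by positivity) (by positivity)]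
          nlinarith [mul_nonneg (mul_nonneg (sub_nonneg.2 hcv) (by linarith : (0:ℝ) ≤ c + v)) (le_of_lt hv0), mul_pos hv0 hv0]

lemma hasDerivAt_Q {p x : ℝ} (hp : 1 < p) (hx : p < x) :
    HasDerivAt Q (deriv V x / x) x := by
  set g : ℝ → ℝ := fun v => -(deriv V v) / v with hg
  have hx1 : 1 < x := lt_trans hp hx
  have hint : IntegrableOn g (Set.Ioi p) := integrableOn_g hp
  have hQeq : ∀ u, p < u → Q u = Q p - ∫ t in p..u, g t := by
    intro u hu
    have hle : p ≤ u := le_of_lt hu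
    have hsplit : (∫ v in Set.Ioi p, g v) = (∫ v in Set.Ioc p u, g v) + ∫ v in Set.Ioi u, g v := by
      rw [← setIntegral_union (Set.Ioc_disjoint_Ioi le_rfl) measurableSet_Ioi
        (hint.mono_set Set.Ioc_subset_Ioi_self) (hint.mono_set (Set.Ioi_subset_Ioi hle)),
        Set.Ioc_union_Ioi_eq_Ioi hle]
    have h1 : Q u = ∫ v in Set.Ioi u, g v := rfl
    have h2 : Q p = ∫ v in Set.Ioi p, g v := rfl
    rw [h1, h2, intervalIntegral.integral_of_le hle, hsplit]
    ring
  have hFTC : HasDerivAt (fun u => ∫ t in p..u, g t) (g x) x := by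
    apply intervalIntegral.integral_hasDerivAt_right
    · exact (intervalIntegrable_iff_integrableOn_Ioc_of_le (le_of_lt hx)).2
        (hint.mono_set Set.Ioc_subset_Ioi_self)
    · exact ContinuousOn.stronglyMeasurableAtFilter isOpen_Ioi contOn_g x hx1
    · exact contOn_g.continuousAt (isOpen_Ioi.mem_nhds hx1)
  have hfeq : Q =ᶠ[nhds x] fun u => Q p - ∫ t in p..u, g t := by
    filter_upwards [isOpen_Ioi.mem_nhds hx] with u hu
    exact hQeq u hu
  have hD := ((hasDerivAt_const x (Q p)).sub hFTC).congr_of_eventuallyEq hfeq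
  refine hD.congr_deriv ?_
  simp only [hg]
  ring

noncomputable def G (t : ℝ) : ℝ := V t + Real.log ((t - 1) / t)

lemma hasDerivAt_G {t : ℝ} (ht : 1 < t) :
    HasDerivAt G (Real.log (t ^ 2 / (t ^ 2 - 1)) - 2 / (t ^ 2 - 1) + 1 / (t * (t - 1))) t := by
  have ht0 : (0:ℝ) < t := lt_trans one_pos ht
  have ht1 : (0:ℝ) < t - 1 := by linarith
  have hlog : HasDerivAt (fun s : ℝ => Real.log ((s - 1) / s)) (1 / (t * (t - 1))) t := by
    have h1 : HasDerivAt (fun s : ℝ => Real.log (s - 1) - Real.log s) (1 / (t - 1) - t⁻¹) t := by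
      have ha : HasDerivAt (fun s : ℝ => Real.log (s - 1)) (1 / (t - 1)) t := by
        simpa using ((hasDerivAt_id t).sub_const 1).log (ne_of_gt ht1)
      exact ha.sub (Real.hasDerivAt_log (ne_of_gt ht0))
    have heq : (fun s : ℝ => Real.log ((s - 1) / s)) =ᶠ[nhds t]
        fun s => Real.log (s - 1) - Real.log s := by
      filter_upwards [isOpen_Ioi.mem_nhds (show t ∈ Set.Ioi 1 from ht)] with s hs
      have hs1 : (1:ℝ) < s := hs
      rw [Real.log_div (by linarith) (by linarith)]
    have := h1.congr_of_eventuallyEq heq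
    refine this.congr_deriv ?_
    field_simp
    ring
  have := (hasDerivAt_V ht).add hlog
  exact this

lemma G_strictMono : StrictMonoOn G (Set.Ioi 1) := by
  apply strictMonoOn_of_deriv_pos (convex_Ioi 1)
  · intro t ht
    exact (hasDerivAt_G ht).continuousAt.continuousWithinAt
  · rw [interior_Ioi]
    intro t ht
    have ht' : (1:ℝ) < t := ht
    have ht0 : (0:ℝ) < t := lt_trans one_pos ht'
    have ht1 : (0:ℝ) < t - 1 := by linarith
    have h1 : (0:ℝ) < t ^ 2 - 1 := by nlinarith
    rw [(hasDerivAt_G ht').deriv]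
    have hb := (log_bounds ht').1
    have key : (0:ℝ) < 1 / t ^ 2 - 2 / (t ^ 2 - 1) + 1 / (t * (t - 1)) := by
      rw [show 1 / t ^ 2 - 2 / (t ^ 2 - 1) + 1 / (t * (t - 1))
          = 1 / t ^ 2 - 1 / (t * (t + 1)) by field_simp; ring]
      have h2 : 1 / (t * (t + 1)) < 1 / t ^ 2 := by
        rw [div_lt_div_iff₀ (by positivity) (by positivity)]
        nlinarith
      linarith
    linarith

lemma hasDerivAt_W {p x : ℝ} (hp : 1 < p) (hx : p < x) :
    HasDerivAt (W p)
      (-(deriv V x) + deriv V x / x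
        - (p - 1) * (Real.exp (V p - V x) * -(deriv V x)) / p) x := by
  have hx1 : 1 < x := lt_trans hp hx
  have hV : HasDerivAt V (deriv V x) x := by
    rw [deriv_V_eq hx1]; exact hasDerivAt_V hx1
  have hQ := hasDerivAt_Q hp hx
  have hexp : HasDerivAt (fun y => Real.exp (V p - V y))
      (Real.exp (V p - V x) * (0 - deriv V x)) x :=
    ((hasDerivAt_const x (V p)).sub hV).exp
  have h1 : HasDerivAt (fun y => V p - Q p - V y + Q y) (0 - deriv V x + deriv V x / x) x :=
    ((hasDerivAt_const x (V p - Q p)).sub hV).add hQ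
  have h2 : HasDerivAt (fun y => (p - 1) * (Real.exp (V p - V y) - 1) / p)
      ((p - 1) * (Real.exp (V p - V x) * (0 - deriv V x)) / p) x :=
    ((hexp.sub_const 1).const_mul (p - 1)).div_const p
  have hcomb := h1.sub h2
  have hfun : W p = fun y => (V p - Q p - V y + Q y)
      - (p - 1) * (Real.exp (V p - V y) - 1) / p := rfl
  rw [hfun]
  refine hcomb.congr_deriv ?_
  ring

theorem stmt_12 (p : ℝ) (hp : 1 < p) : StrictMonoOn (W p) (Set.Ioi p) := by
  apply strictMonoOn_of_deriv_pos (convex_Ioi p)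
  · intro x hx
    exact (hasDerivAt_W hp hx).continuousAt.continuousWithinAt
  · rw [interior_Ioi]
    intro x hx
    have hx' : p < x := hx
    have hx1 : 1 < x := lt_trans hp hx'
    rw [(hasDerivAt_W hp hx').deriv]
    have hdV := deriv_V_neg hx1
    have hp0 : (0:ℝ) < p := lt_trans one_pos hp
    have hp1 : (0:ℝ) < p - 1 := by linarith
    have hx0 : (0:ℝ) < x := lt_trans one_pos hx1
    have hxm1 : (0:ℝ) < x - 1 := by linarith
    have hGm : G p < G x := G_strictMono (Set.mem_Ioi.mpr hp) (Set.mem_Ioi.mpr hx1) hx'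
    set E := Real.exp (V p - V x) with hE
    have hE_lt : E < ((x - 1) / x) * (p / (p - 1)) := by
      have hlog2 : Real.log (((x - 1) / x) * (p / (p - 1)))
          = Real.log ((x - 1) / x) - Real.log ((p - 1) / p) := by
        rw [Real.log_mul (by positivity) (by positivity),
          Real.log_div (ne_of_gt hp0) (ne_of_gt hp1),
          Real.log_div (ne_of_gt hp1) (ne_of_gt hp0)]
        ring
      have h1 : V p - V x < Real.log (((x - 1) / x) * (p / (p - 1))) := by
        have hG' : V p + Real.log ((p - 1) / p) < V x + Real.log ((x - 1) / x) := hGm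
        rw [hlog2]
        linarith
      calc E = Real.exp (V p - V x) := hE
        _ < Real.exp (Real.log (((x - 1) / x) * (p / (p - 1)))) := Real.exp_lt_exp.2 h1
        _ = ((x - 1) / x) * (p / (p - 1)) := Real.exp_log (by positivity)
    have hB : (0:ℝ) < 1 - 1 / x - (p - 1) / p * E := by
      have h2 : (p - 1) / p * E < (p - 1) / p * (((x - 1) / x) * (p / (p - 1))) :=
        mul_lt_mul_of_pos_left hE_lt (by positivity)
      have h3 : (p - 1) / p * (((x - 1) / x) * (p / (p - 1))) = (x - 1) / x := by
        field_simp
      have h4 : (x - 1) / x = 1 - 1 / x := by field_simp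
      rw [h3, h4] at h2
      linarith
    have hgoal : -(deriv V x) + deriv V x / x - (p - 1) * (E * -(deriv V x)) / p
        = (-(deriv V x)) * (1 - 1 / x - (p - 1) / p * E) := by ring
    rw [hgoal]
    exact mul_pos (neg_pos.2 hdV) hB
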